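/- Let P and Q be polynomials in K[x_1,...,x_n] and T an irregular triangular set such that prem(P, T) = 0 and prem(Q, T) = 0. It is not true in general that prem(P + Q, T) = 0; i.e., the set {F : prem(F, T) = 0} need not be closed under addition for arbitrary (irregular) triangular sets T. Concretely, a triangular set T is regular if and only if {F : prem(F, T) = 0} = sat(T) (which is an ideal), so for irregular T the set {F : prem(F, T) = 0} strictly contains or differs from sat(T) and can fail additivity. -/

import Mathlib

open MvPolynomial

namespace CharDec

variable {K : Type*} [Field K] {σ : Type*} [LinearOrder σ]

/-- Lexicographic comparison of exponent vectors (larger variables dominate):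
`a ≤ b` iff `a = b` or at the greatest index where they differ, `a` is smaller. -/
def lexLe (a b : σ →₀ ℕ) : Prop :=
  a = b ∨ ∃ i : σ, a i < b i ∧ ∀ j : σ, i < j → a j = b j

/-- `m` is the leading monomial of `f` with respect to the lex term ordering. -/
def IsLeadMon (f : MvPolynomial σ K) (m : σ →₀ ℕ) : Prop :=
  m ∈ f.support ∧ ∀ m' ∈ f.support, lexLe m' m

/-- `f` has leading (greatest actually occurring) variable `i`. -/
def HasLV (f : MvPolynomial σ K) (i : σ) : Prop :=
  i ∈ f.vars ∧ ∀ j ∈ f.vars, j ≤ i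

/-- The coefficient of `(X i) ^ d` in `f`, as a polynomial in the remaining variables. -/
noncomputable def coeffWrt (i : σ) (d : ℕ) (f : MvPolynomial σ K) :
    MvPolynomial σ K :=
  ∑ m ∈ f.support.filter (fun m => m i = d), monomial (m.update i 0) (f.coeff m)

/-- The initial (leading coefficient in the leading variable) of `f` with
respect to the variable `i`. -/
noncomputable def initialWrt (i : σ) (f : MvPolynomial σ K) : MvPolynomial σ K :=
  coeffWrt i (f.degreeOf i) f

/-- `R` is the pseudo-remainder of `P` on pseudo-division by `Q` with respect
to the variable `y` (classical pseudo-division, with the exponent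
`deg P - deg Q + 1` when `deg P ≥ deg Q`, and `0` otherwise). -/
def IsPrem (y : σ) (Q P R : MvPolynomial σ K) : Prop :=
  ∃ A : MvPolynomial σ K,
    (initialWrt y Q) ^ (P.degreeOf y + 1 - Q.degreeOf y) * P = A * Q + R ∧
    R.degreeOf y < Q.degreeOf y

/-- `IterPrem P L R` : `R` is the iterated pseudo-remainder of `P` by the
list `L` of pairs (leading variable, divisor), divisors being used from the
head of the list on. -/
def IterPrem : MvPolynomial σ K → List (σ × MvPolynomial σ K) →
    MvPolynomial σ K → Prop
  | P, [], R => R = P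
  | P, e :: L, R => ∃ S, IsPrem e.1 e.2 P S ∧ IterPrem S L R

/-- A triangular set: a list of (leading variable, polynomial) pairs with
strictly increasing leading variables. -/
structure TriSet (K : Type*) [Field K] (σ : Type*) [LinearOrder σ] where
  elems : List (σ × MvPolynomial σ K)
  sorted : elems.Pairwise (fun e e' => e.1 < e'.1)
  hlv : ∀ e ∈ elems, HasLV e.2 e.1

namespace TriSet

/-- The list of leading variables of a triangular set. -/
def lvs (T : TriSet K σ) : List σ := T.elems.map Prod.fst

/-- The list of polynomials of a triangular set. -/
def polys (T : TriSet K σ) : List (MvPolynomial σ K) := T.elems.map Prod.snd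

/-- A variable is a parameter of `T` if it is not a leading variable of `T`. -/
def IsParam (T : TriSet K σ) (j : σ) : Prop := j ∉ T.lvs

/-- `T` is normal: every initial involves only the parameters of `T`. -/
def Normal (T : TriSet K σ) : Prop :=
  ∀ e ∈ T.elems, ∀ j ∈ (initialWrt e.1 e.2).vars, T.IsParam j

/-- `T` is zero-dimensional: every variable is a leading variable of `T`. -/
def ZeroDim (T : TriSet K σ) : Prop := ∀ i : σ, i ∈ T.lvs

/-- The product of the initials of `T`. -/
noncomputable def prodInit (T : TriSet K σ) : MvPolynomial σ K :=
  (T.elems.map fun e => initialWrt e.1 e.2).prod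

/-- The ideal generated by the polynomials of `T`. -/
noncomputable def ideal (T : TriSet K σ) : Ideal (MvPolynomial σ K) :=
  Ideal.span {p | ∃ e ∈ T.elems, p = e.2}

end TriSet

/-- The saturation `I : J^∞` of an ideal `I` by an element `J`. -/
def satBy (I : Ideal (MvPolynomial σ K)) (J : MvPolynomial σ K) :
    Ideal (MvPolynomial σ K) where
  carrier := {p | ∃ k : ℕ, J ^ k * p ∈ I}
  zero_mem' := ⟨0, by simp⟩
  add_mem' := by
    rintro a b ⟨k, hk⟩ ⟨l, hl⟩
    refine ⟨k + l, ?_⟩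
    have h : J ^ (k + l) * (a + b) = J ^ l * (J ^ k * a) + J ^ k * (J ^ l * b) := by ring
    rw [h]
    exact add_mem (Ideal.mul_mem_left _ _ hk) (Ideal.mul_mem_left _ _ hl)
  smul_mem' := by
    rintro c a ⟨k, hk⟩
    refine ⟨k, ?_⟩
    have h : J ^ k * (c • a) = c * (J ^ k * a) := by rw [smul_eq_mul]; ring
    rw [h]
    exact Ideal.mul_mem_left _ _ hk

namespace TriSet

/-- The saturated ideal `sat(T) = ⟨T⟩ : (∏ initials)^∞` of a triangular set. -/
noncomputable def sat (T : TriSet K σ) : Ideal (MvPolynomial σ K) :=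
  satBy T.ideal T.prodInit

/-- The triangular set formed by the first `i` elements of `T`. -/
def take (T : TriSet K σ) (i : ℕ) : TriSet K σ :=
  ⟨T.elems.take i, T.sorted.sublist (List.take_sublist i T.elems),
    fun e he => T.hlv e (List.mem_of_mem_take he)⟩

/-- `T` is a regular set: each initial is neither zero nor a zero-divisor
modulo the saturated ideal of the preceding subset. -/
def Regular (T : TriSet K σ) : Prop :=
  ∀ i : ℕ, ∀ h : i < T.elems.length,
    initialWrt (T.elems.get ⟨i, h⟩).1 (T.elems.get ⟨i, h⟩).2 ∉ (T.take i).sat ∧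
    ∀ p : MvPolynomial σ K,
      initialWrt (T.elems.get ⟨i, h⟩).1 (T.elems.get ⟨i, h⟩).2 * p ∈ (T.take i).sat →
        p ∈ (T.take i).sat

end TriSet

/-- The zero set, in (the algebraic closure of `K`)^σ, of a set of polynomials. -/
def zeroSet (S : Set (MvPolynomial σ K)) : Set (σ → AlgebraicClosure K) :=
  {x | ∀ p ∈ S, aeval x p = 0}

/-- `Zero(T / ini(T))` : the common zeros of `T` at which no initial of `T` vanishes. -/
def TriSet.zeroQuasi (T : TriSet K σ) : Set (σ → AlgebraicClosure K) :=
  {x | (∀ e ∈ T.elems, aeval x e.2 = 0) ∧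
       (∀ e ∈ T.elems, aeval x (initialWrt e.1 e.2) ≠ 0)}

/-- `G` is a (finite) Gröbner basis of `I` with respect to the lex term
ordering: `G ⊆ I` and the leading monomial of every nonzero element of `I` is
divisible by the leading monomial of some element of `G`. -/
def IsGB (G : Set (MvPolynomial σ K)) (I : Ideal (MvPolynomial σ K)) : Prop :=
  G.Finite ∧ G ⊆ ↑I ∧
  ∀ f ∈ I, f ≠ 0 → ∃ g ∈ G, ∃ mf mg, IsLeadMon f mf ∧ IsLeadMon g mg ∧ ∀ j, mg j ≤ mf j

/-- `G` is the reduced lex Gröbner basis of `I`. -/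
def IsReducedGB (G : Set (MvPolynomial σ K)) (I : Ideal (MvPolynomial σ K)) : Prop :=
  IsGB G I ∧ (0 : MvPolynomial σ K) ∉ G ∧
  (∀ g ∈ G, ∀ m, IsLeadMon g m → g.coeff m = 1) ∧
  (∀ g ∈ G, ∀ g' ∈ G, g' ≠ g → ∀ m ∈ g.support, ∀ m', IsLeadMon g' m' →
    ¬ (∀ j, m' j ≤ m j))

/-- `C` is the W-characteristic set extracted from the (reduced lex Gröbner
basis) `G`: for each leading variable occurring in `G`, `C` contains the
lex-minimal element of `G` with that leading variable. -/
def IsWCharOf (C : TriSet K σ) (G : Set (MvPolynomial σ K)) : Prop :=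
  (∀ e ∈ C.elems, e.2 ∈ G ∧
    ∀ g ∈ G, HasLV g e.1 → ∀ mg me, IsLeadMon g mg → IsLeadMon e.2 me → lexLe me mg) ∧
  (∀ g ∈ G, ∀ i : σ, HasLV g i → i ∈ C.lvs)

/-- The Sylvester-style matrix of two univariate polynomials. -/
noncomputable def sylvester {R : Type*} [CommRing R] (f g : Polynomial R) :
    Matrix (Fin (f.natDegree + g.natDegree)) (Fin (f.natDegree + g.natDegree)) R :=
  Matrix.of fun i j =>
    if (i : ℕ) < g.natDegree then
      (if (i : ℕ) ≤ (j : ℕ) then f.coeff ((j : ℕ) - (i : ℕ)) else 0)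
    else
      (if (i : ℕ) - g.natDegree ≤ (j : ℕ) then g.coeff ((j : ℕ) - ((i : ℕ) - g.natDegree))
       else 0)

/-- The resultant of two univariate polynomials, as the determinant of their
Sylvester matrix. -/
noncomputable def resultantP {R : Type*} [CommRing R] (f g : Polynomial R) : R :=
  (sylvester f g).det

/-- View a multivariate polynomial as a univariate polynomial in the variable `i`. -/
noncomputable def toUni (i : σ) (f : MvPolynomial σ K) :
    Polynomial (MvPolynomial σ K) :=
  aeval (fun j => if j = i then Polynomial.X else Polynomial.C (X j)) f

/-- The resultant of two multivariate polynomials with respect to the variable `i`. -/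
noncomputable def resWrt (i : σ) (f g : MvPolynomial σ K) : MvPolynomial σ K :=
  resultantP (toUni i f) (toUni i g)

/-- The iterated resultant of `f` with respect to a list of
(leading variable, divisor) pairs, used from the head of the list on. -/
noncomputable def iterRes : MvPolynomial σ K → List (σ × MvPolynomial σ K) →
    MvPolynomial σ K
  | f, [] => f
  | f, e :: L => iterRes (resWrt e.1 f e.2) L

end CharDec

namespace CharDec

variable {K : Type*} [Field K] {σ : Type*} [LinearOrder σ]

open MvPolynomial

/-- Closed form for the coefficients of `coeffWrt`. -/
theorem coeff_coeffWrt (i : σ) (d : ℕ) (f : MvPolynomial σ K) (m : σ →₀ ℕ) :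
    coeff m (coeffWrt i d f) =
      if m i = 0 then coeff (m.update i d) f else 0 := by
  classical
  rw [coeffWrt]
  rw [coeff_sum]
  by_cases h : m i = 0
  · rw [if_pos h]
    rw [Finset.sum_eq_single (m.update i d)]
    · rw [coeff_monomial]
      have : (m.update i d).update i 0 = m := by
        rw [Finsupp.update_idem, ← h, Finsupp.update_self]
      rw [if_pos this]
    · intro b hb hne
      rw [coeff_monomial, if_neg]
      intro hbm
      apply hne
      have hbi : b i = d := (Finset.mem_filter.mp hb).2
      calc b = (b.update i 0).update i (b i) := by
                rw [Finsupp.update_idem, Finsupp.update_self]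
           _ = m.update i d := by rw [hbm, hbi]
    · intro hnm
      rw [coeff_monomial]
      have : coeff (m.update i d) f = 0 := by
        by_contra hc
        apply hnm
        rw [Finset.mem_filter]
        refine ⟨mem_support_iff.mpr hc, ?_⟩
        simp [Finsupp.update_self, Finsupp.coe_update]
      rw [this]
      simp
  · rw [if_neg h]
    apply Finset.sum_eq_zero
    intro b hb
    rw [coeff_monomial, if_neg]
    intro hbm
    apply h
    rw [← hbm]
    simp [Finsupp.coe_update]

end CharDec
namespace CharDec

variable {K : Type*} [Field K] {σ : Type*} [LinearOrder σ]

open MvPolynomial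

theorem coeffWrt_zero_poly (i : σ) (d : ℕ) :
    coeffWrt i d (0 : MvPolynomial σ K) = 0 := by
  ext m; rw [coeff_coeffWrt]; simp

theorem coeffWrt_add (i : σ) (d : ℕ) (f g : MvPolynomial σ K) :
    coeffWrt i d (f + g) = coeffWrt i d f + coeffWrt i d g := by
  ext m; simp only [coeff_coeffWrt, coeff_add]
  split <;> simp

theorem coeffWrt_neg (i : σ) (d : ℕ) (f : MvPolynomial σ K) :
    coeffWrt i d (-f) = -coeffWrt i d f := by
  ext m; simp only [coeff_coeffWrt, coeff_neg]
  split <;> simp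

theorem coeffWrt_eq_zero_iff {i : σ} {e : ℕ} {f : MvPolynomial σ K} :
    coeffWrt i e f = 0 ↔ ∀ m : σ →₀ ℕ, m i = e → coeff m f = 0 := by
  constructor
  · intro h m hm
    have h0 : coeff (m.update i 0) (coeffWrt i e f) = 0 := by rw [h]; simp
    rw [coeff_coeffWrt] at h0
    have h1 : (m.update i 0) i = 0 := by simp [Finsupp.coe_update]
    rw [if_pos h1, Finsupp.update_idem, ← hm, Finsupp.update_self] at h0
    exact h0
  · intro h
    ext m
    rw [coeff_coeffWrt]
    by_cases hm : m i = 0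
    · rw [if_pos hm]
      simp only [coeff_zero]
      exact h _ (by simp [Finsupp.coe_update])
    · rw [if_neg hm]; simp

theorem degreeOf_coeffWrt_self (i : σ) (d : ℕ) (f : MvPolynomial σ K) :
    degreeOf i (coeffWrt i d f) = 0 := by
  rw [Nat.le_zero.symm]
  rw [degreeOf_le_iff]
  intro m hm
  rw [mem_support_iff, coeff_coeffWrt] at hm
  by_cases h : m i = 0
  · exact h.le
  · exact absurd (if_neg h) hm

theorem degreeOf_coeffWrt_le (i z : σ) (d : ℕ) (f : MvPolynomial σ K) :
    degreeOf z (coeffWrt i d f) ≤ degreeOf z f := by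
  rw [degreeOf_le_iff]
  intro m hm
  rw [mem_support_iff, coeff_coeffWrt] at hm
  by_cases h : m i = 0
  · rw [if_pos h] at hm
    have hmem : m.update i d ∈ f.support := mem_support_iff.mpr hm
    have := degreeOf_le_iff.mp (le_refl (degreeOf z f)) _ hmem
    by_cases hz : z = i
    · subst hz; simp [h]
    · have : (m.update i d) z = m z := by
        simp [Finsupp.coe_update, Function.update_apply, (by exact fun hc => hz hc : z = i → False)]
      omega
  · exact absurd (if_neg h) hm

theorem coeffWrt_eq_zero_of_degreeOf_lt {i : σ} {e : ℕ} {f : MvPolynomial σ K}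
    (h : degreeOf i f < e) : coeffWrt i e f = 0 := by
  rw [coeffWrt_eq_zero_iff]
  intro m hm
  by_contra hc
  have := degreeOf_le_iff.mp (le_refl (degreeOf i f)) m (mem_support_iff.mpr hc)
  omega

theorem degreeOf_le_of_coeffWrt {i : σ} {D : ℕ} {f : MvPolynomial σ K}
    (h : ∀ e, D < e → coeffWrt i e f = 0) : degreeOf i f ≤ D := by
  rw [degreeOf_le_iff]
  intro m hm
  by_contra hc
  push_neg at hc
  have h0 := coeffWrt_eq_zero_iff.mp (h (m i) hc) m rfl
  exact (mem_support_iff.mp hm) h0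

theorem coeffWrt_degreeOf_ne_zero {i : σ} {f : MvPolynomial σ K} (hf : f ≠ 0) :
    coeffWrt i (degreeOf i f) f ≠ 0 := by
  intro h
  have hsupp : f.support.Nonempty := by
    rw [Finset.nonempty_iff_ne_empty]
    simpa [support_eq_empty] using hf
  obtain ⟨m, hm, hsup⟩ := Finset.exists_mem_eq_sup f.support hsupp (fun m => m i)
  rw [degreeOf_eq_sup] at h
  rw [hsup] at h  -- h : coeffWrt i (m i) f = 0  (after rewriting sup)
  exact (mem_support_iff.mp hm) (coeffWrt_eq_zero_iff.mp h m rfl)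

end CharDec
namespace CharDec

variable {K : Type*} [Field K] {σ : Type*} [LinearOrder σ]

open MvPolynomial

/-- Auxiliary Finsupp fact. -/
theorem update_sub_single {m : σ →₀ ℕ} {i : σ} {e k : ℕ} :
    m.update i e - Finsupp.single i k = m.update i (e - k) := by
  ext w
  by_cases hw : w = i
  · subst hw
    simp [Finsupp.coe_update, Finsupp.coe_tsub]
  · simp [Finsupp.coe_update, Finsupp.coe_tsub, Function.update_apply, hw,
      Finsupp.single_apply, Ne.symm hw]

theorem single_le_update_iff {m : σ →₀ ℕ} {i : σ} {e k : ℕ} :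
    Finsupp.single i k ≤ m.update i e ↔ k ≤ e := by
  rw [Finsupp.single_le_iff]
  simp [Finsupp.coe_update]

theorem sub_single_update_self {m : σ →₀ ℕ} {i : σ} :
    (m - Finsupp.single i (m i)).update i (m i) = m := by
  ext w
  by_cases hw : w = i
  · subst hw; simp [Finsupp.coe_update]
  · simp [Finsupp.coe_update, Function.update_apply, hw, Finsupp.coe_tsub,
      Finsupp.single_apply, Ne.symm hw]

/-- Decomposition of `f` as a polynomial in `X i`. -/
theorem coeffWrt_decomposition (i : σ) (f : MvPolynomial σ K) :
    f = ∑ e ∈ Finset.range (degreeOf i f + 1), coeffWrt i e f * X i ^ e := by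
  classical
  ext m
  rw [coeff_sum]
  have key : ∀ e : ℕ, coeff m (coeffWrt i e f * X i ^ e) =
      if e = m i then coeff m f else 0 := by
    intro e
    rw [X_pow_eq_monomial, coeff_mul_monomial']
    by_cases hle : Finsupp.single i e ≤ m
    · rw [if_pos hle]
      have hei : e ≤ m i := by
        have := hle i; simpa [Finsupp.single_apply] using this
      rw [coeff_coeffWrt]
      have hsub : (m - Finsupp.single i e) i = m i - e := by
        simp [Finsupp.coe_tsub, Finsupp.single_apply]
      by_cases he : e = m i
      · rw [if_pos (by omega), he, sub_single_update_self, if_pos rfl, mul_one]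
      · rw [if_neg (by omega), if_neg he, zero_mul]
    · rw [if_neg hle, if_neg]
      intro he
      subst he
      exact hle (by rw [Finsupp.single_le_iff])
  simp only [key]
  rw [Finset.sum_ite_eq' (Finset.range (degreeOf i f + 1)) (m i) (fun _ => coeff m f)]
  by_cases hm : m i ∈ Finset.range (degreeOf i f + 1)
  · rw [if_pos hm]
  · rw [if_neg hm]
    rw [Finset.mem_range] at hm
    by_contra hc
    have := degreeOf_le_iff.mp (le_refl (degreeOf i f)) m (mem_support_iff.mpr hc)
    omega

end CharDec
namespace CharDec

variable {K : Type*} [Field K] {σ : Type*} [LinearOrder σ]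

open MvPolynomial

theorem update_zero_of_apply_zero {u : σ →₀ ℕ} {i : σ} (h : u i = 0) :
    u.update i 0 = u := by
  rw [← h, Finsupp.update_self]

/-- Convolution formula for `coeffWrt` of a product. -/
theorem coeffWrt_mul (i : σ) (e : ℕ) (f g : MvPolynomial σ K) :
    coeffWrt i e (f * g) =
      ∑ p ∈ Finset.HasAntidiagonal.antidiagonal e, coeffWrt i p.1 f * coeffWrt i p.2 g := by
  classical
  ext m
  rw [coeff_coeffWrt, coeff_sum]
  by_cases hm : m i = 0
  · rw [if_pos hm, coeff_mul]
    have hterm : ∀ p ∈ Finset.HasAntidiagonal.antidiagonal e,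
        coeff m (coeffWrt i p.1 f * coeffWrt i p.2 g) =
        ∑ q ∈ Finset.HasAntidiagonal.antidiagonal m,
          coeff (q.1.update i p.1) f * coeff (q.2.update i p.2) g := by
      intro p _
      rw [coeff_mul]
      apply Finset.sum_congr rfl
      intro q hq
      have hq' := Finset.HasAntidiagonal.mem_antidiagonal.mp hq
      have hsum : q.1 i + q.2 i = m i := by
        rw [← Finsupp.add_apply, hq']
      have hu : q.1 i = 0 := by omega
      have hv : q.2 i = 0 := by omega
      rw [coeff_coeffWrt, coeff_coeffWrt, if_pos hu, if_pos hv]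
    rw [Finset.sum_congr rfl hterm, ← Finset.sum_product']
    symm
    refine Finset.sum_nbij'
      (i := fun pq : (ℕ × ℕ) × ((σ →₀ ℕ) × (σ →₀ ℕ)) =>
        (pq.2.1.update i pq.1.1, pq.2.2.update i pq.1.2))
      (j := fun w : (σ →₀ ℕ) × (σ →₀ ℕ) =>
        ((w.1 i, w.2 i), (w.1.update i 0, w.2.update i 0)))
      ?_ ?_ ?_ ?_ ?_
    · rintro ⟨⟨a, b⟩, ⟨u, v⟩⟩ hmem
      simp only [Finset.mem_product, Finset.HasAntidiagonal.mem_antidiagonal] at hmem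
      rw [Finset.HasAntidiagonal.mem_antidiagonal]
      ext w
      by_cases hw : w = i
      · subst hw
        simp [Finsupp.coe_update, hmem.1]
      · simp only [Finsupp.add_apply, Finsupp.coe_update, Function.update_apply,
          if_neg hw]
        rw [← Finsupp.add_apply, hmem.2]
    · rintro ⟨w1, w2⟩ hmem
      rw [Finset.HasAntidiagonal.mem_antidiagonal] at hmem
      simp only [Finset.mem_product, Finset.HasAntidiagonal.mem_antidiagonal]
      constructor
      · have := congrArg (fun s => s i) hmem
        simpa [Finsupp.coe_update] using this
      · ext w
        by_cases hw : w = i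
        · subst hw; simp [Finsupp.coe_update, hm]
        · have := congrArg (fun s => s w) hmem
          simp only [Finsupp.add_apply, Finsupp.coe_update, Function.update_apply,
            if_neg hw] at this ⊢
          exact this
    · rintro ⟨⟨a, b⟩, ⟨u, v⟩⟩ hmem
      simp only [Finset.mem_product, Finset.HasAntidiagonal.mem_antidiagonal] at hmem
      have hsum : u i + v i = m i := by rw [← Finsupp.add_apply, hmem.2]
      have hu : u i = 0 := by omega
      have hv : v i = 0 := by omega
      simp only [Finsupp.coe_update, Function.update_self]
      rw [Finsupp.update_idem, Finsupp.update_idem, update_zero_of_apply_zero hu,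
        update_zero_of_apply_zero hv]
    · rintro ⟨w1, w2⟩ _
      simp only [Finsupp.coe_update, Function.update_self]
      rw [Finsupp.update_idem, Finsupp.update_idem, Finsupp.update_self,
        Finsupp.update_self]
    · rintro ⟨⟨a, b⟩, ⟨u, v⟩⟩ _
      rfl
  · rw [if_neg hm]
    symm
    apply Finset.sum_eq_zero
    intro p _
    rw [coeff_mul]
    apply Finset.sum_eq_zero
    intro q hq
    have hq' := Finset.HasAntidiagonal.mem_antidiagonal.mp hq
    have hsum : q.1 i + q.2 i = m i := by rw [← Finsupp.add_apply, hq']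
    rw [coeff_coeffWrt, coeff_coeffWrt]
    by_cases hu : q.1 i = 0
    · rw [if_pos hu, if_neg (by omega), mul_zero]
    · rw [if_neg hu, zero_mul]
  
end CharDec
namespace CharDec

variable {K : Type*} [Field K] {σ : Type*} [LinearOrder σ]

open MvPolynomial

theorem coeffWrt_zero_of_degreeOf_eq_zero {i : σ} {a : MvPolynomial σ K}
    (ha : degreeOf i a = 0) : coeffWrt i 0 a = a := by
  ext m
  rw [coeff_coeffWrt]
  by_cases hm : m i = 0
  · rw [if_pos hm, update_zero_of_apply_zero hm]
  · rw [if_neg hm]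
    symm
    by_contra hc
    have := degreeOf_le_iff.mp ha.le m (mem_support_iff.mpr hc)
    omega

theorem coeffWrt_mul_left {i : σ} {a : MvPolynomial σ K} (e : ℕ)
    (f : MvPolynomial σ K) (ha : degreeOf i a = 0) :
    coeffWrt i e (a * f) = a * coeffWrt i e f := by
  rw [coeffWrt_mul]
  rw [Finset.sum_eq_single ((0 : ℕ), e)]
  · rw [coeffWrt_zero_of_degreeOf_eq_zero ha]
  · rintro ⟨p1, p2⟩ hp hne
    rw [Finset.HasAntidiagonal.mem_antidiagonal] at hp
    have hp1 : p1 ≠ 0 := by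
      intro h0
      exact hne (by simp [h0, ← hp, Prod.ext_iff])
    rw [coeffWrt_eq_zero_of_degreeOf_lt (by omega), zero_mul]
  · intro h
    exact absurd (Finset.HasAntidiagonal.mem_antidiagonal.mpr (by simp)) h

theorem degreeOf_neg (i : σ) (f : MvPolynomial σ K) :
    degreeOf i (-f) = degreeOf i f := by
  rw [degreeOf_eq_sup, degreeOf_eq_sup, support_neg]

theorem degreeOf_sub_le (i : σ) (f g : MvPolynomial σ K) :
    degreeOf i (f - g) ≤ max (degreeOf i f) (degreeOf i g) := by
  rw [sub_eq_add_neg]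
  calc degreeOf i (f + -g) ≤ max (degreeOf i f) (degreeOf i (-g)) :=
        degreeOf_add_le _ _ _
    _ = max (degreeOf i f) (degreeOf i g) := by rw [degreeOf_neg]

/-- Degree of a product in an integral domain. -/
theorem degreeOf_mul_eq (i : σ) {f g : MvPolynomial σ K} (hf : f ≠ 0) (hg : g ≠ 0) :
    degreeOf i (f * g) = degreeOf i f + degreeOf i g := by
  refine le_antisymm (degreeOf_mul_le _ _ _) ?_
  have htop : coeffWrt i (degreeOf i f + degreeOf i g) (f * g) =
      coeffWrt i (degreeOf i f) f * coeffWrt i (degreeOf i g) g := by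
    rw [coeffWrt_mul]
    rw [Finset.sum_eq_single (degreeOf i f, degreeOf i g)]
    · rintro ⟨p1, p2⟩ hp hne
      rw [Finset.HasAntidiagonal.mem_antidiagonal] at hp
      rcases lt_trichotomy p1 (degreeOf i f) with hlt | heq | hgt
      · rw [coeffWrt_eq_zero_of_degreeOf_lt (i := i) (f := g) (by omega), mul_zero]
      · exact absurd (by simp [heq, ← hp, Prod.ext_iff]; omega) hne
      · rw [coeffWrt_eq_zero_of_degreeOf_lt (by omega), zero_mul]
    · intro h
      exact absurd (Finset.HasAntidiagonal.mem_antidiagonal.mpr (by simp)) h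
  have hne : coeffWrt i (degreeOf i f + degreeOf i g) (f * g) ≠ 0 := by
    rw [htop]
    exact mul_ne_zero (coeffWrt_degreeOf_ne_zero hf) (coeffWrt_degreeOf_ne_zero hg)
  by_contra hlt
  push_neg at hlt
  exact hne (coeffWrt_eq_zero_of_degreeOf_lt hlt)

theorem degreeOf_initialWrt_self (i : σ) (f : MvPolynomial σ K) :
    degreeOf i (initialWrt i f) = 0 := degreeOf_coeffWrt_self i _ f

theorem initialWrt_ne_zero {i : σ} {f : MvPolynomial σ K} (hf : f ≠ 0) :
    initialWrt i f ≠ 0 := coeffWrt_degreeOf_ne_zero hf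

/-- Uniqueness of division with remainder of bounded degree. -/
theorem div_bounded_unique {y : σ} {Q A R A' R' : MvPolynomial σ K} (hQ : Q ≠ 0)
    (h : A * Q + R = A' * Q + R') (hR : degreeOf y R < degreeOf y Q)
    (hR' : degreeOf y R' < degreeOf y Q) : A = A' ∧ R = R' := by
  have key : (A - A') * Q = R' - R := by ring_nf; linear_combination h
  by_cases hA : A = A'
  · constructor
    · exact hA
    · subst hA
      exact (add_left_cancel h)
  · exfalso
    have hAA : A - A' ≠ 0 := sub_ne_zero.mpr hA
    have h1 : degreeOf y ((A - A') * Q) = degreeOf y (A - A') + degreeOf y Q :=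
      degreeOf_mul_eq y hAA hQ
    have h2 : degreeOf y (R' - R) < degreeOf y Q := by
      calc degreeOf y (R' - R) ≤ max (degreeOf y R') (degreeOf y R) :=
            degreeOf_sub_le _ _ _
        _ < degreeOf y Q := by omega
    rw [key] at h1
    omega

theorem isPrem_unique {y : σ} {Q P R R' : MvPolynomial σ K} (hQ : Q ≠ 0)
    (h1 : IsPrem y Q P R) (h2 : IsPrem y Q P R') : R = R' := by
  obtain ⟨A, hA, hdR⟩ := h1
  obtain ⟨A', hA', hdR'⟩ := h2
  exact (div_bounded_unique hQ (hA ▸ hA') hdR hdR').2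

/-- A polynomial already reduced is its own pseudo-remainder. -/
theorem isPrem_self {y : σ} {Q P : MvPolynomial σ K}
    (hdP : degreeOf y P < degreeOf y Q) : IsPrem y Q P P := by
  refine ⟨0, ?_, hdP⟩
  have : P.degreeOf y + 1 - Q.degreeOf y = 0 := by omega
  rw [this, pow_zero, one_mul, zero_mul, zero_add]

end CharDec
namespace CharDec

variable {K : Type*} [Field K] {σ : Type*} [LinearOrder σ]

open MvPolynomial

theorem coeffWrt_X_pow_mul (i : σ) (e k : ℕ) (g : MvPolynomial σ K) :
    coeffWrt i e (X i ^ k * g) =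
      if k ≤ e then coeffWrt i (e - k) g else 0 := by
  ext m
  rw [coeff_coeffWrt, X_pow_eq_monomial]
  by_cases hm : m i = 0
  · rw [if_pos hm, coeff_monomial_mul']
    by_cases hk : k ≤ e
    · rw [if_pos (single_le_update_iff.mpr hk), if_pos hk, one_mul,
        update_sub_single, coeff_coeffWrt, if_pos hm]
    · rw [if_neg (fun hc => hk (single_le_update_iff.mp hc)), if_neg hk, coeff_zero]
  · rw [if_neg hm]
    split <;> simp [coeff_coeffWrt, if_neg hm]

theorem degreeOf_X_pow_le (i y : σ) (k : ℕ) (h : i ≠ y) :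
    degreeOf i ((X y : MvPolynomial σ K) ^ k) = 0 := by
  classical
  have h1 := degreeOf_pow_le i (X y : MvPolynomial σ K) k
  rw [degreeOf_X] at h1
  rw [if_neg h] at h1
  omega

/-- Existence of pseudo-division, with a degree bound in every variable not
occurring in the divisor. -/
theorem isPrem_exists_aux (y : σ) (Q : MvPolynomial σ K)
    (hd : 0 < degreeOf y Q) (D : ℕ) :
    ∀ P : MvPolynomial σ K, degreeOf y P ≤ D →
      ∃ A R : MvPolynomial σ K,
        initialWrt y Q ^ (D + 1 - degreeOf y Q) * P = A * Q + R ∧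
        degreeOf y R < degreeOf y Q ∧
        ∀ z, degreeOf z Q = 0 → degreeOf z R ≤ degreeOf z P := by
  induction D with
  | zero =>
    intro P hP
    have h0 : 0 + 1 - degreeOf y Q = 0 := by omega
    exact ⟨0, P, by rw [h0, pow_zero, one_mul, zero_mul, zero_add],
      by omega, fun z _ => le_refl _⟩
  | succ D ih =>
    intro P hP
    by_cases hcase : D + 1 < degreeOf y Q
    · have h0 : D + 1 + 1 - degreeOf y Q = 0 := by omega
      exact ⟨0, P, by rw [h0, pow_zero, one_mul, zero_mul, zero_add],
        by omega, fun z _ => le_refl _⟩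
    · push_neg at hcase
      set d := degreeOf y Q with hdQ
      set h := initialWrt y Q with hh
      set c := coeffWrt y (D + 1) P with hc
      set k := D + 1 - d with hk
      set P' := h * P - c * (X y ^ k * Q) with hP'
      have hdh : degreeOf y h = 0 := degreeOf_initialWrt_self y Q
      have hdc : degreeOf y c = 0 := degreeOf_coeffWrt_self y _ P
      -- degree of P' in y is at most D
      have hP'deg : degreeOf y P' ≤ D := by
        apply degreeOf_le_of_coeffWrt
        intro e he
        rw [hP', sub_eq_add_neg, coeffWrt_add, coeffWrt_neg,
          coeffWrt_mul_left e P hdh, coeffWrt_mul_left e _ hdc,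
          coeffWrt_X_pow_mul]
        have hke : k ≤ e := by omega
        rw [if_pos hke]
        by_cases heD : e = D + 1
        · subst heD
          have he2 : D + 1 - k = d := by omega
          have he3 : coeffWrt y (D + 1 - k) Q = h := by rw [he2]; rw [hh, hdQ]; rfl
          rw [he3, ← hc]
          ring
        · have h1 : coeffWrt y e P = 0 :=
            coeffWrt_eq_zero_of_degreeOf_lt (by omega)
          have h2 : coeffWrt y (e - k) Q = 0 :=
            coeffWrt_eq_zero_of_degreeOf_lt (by omega)
          rw [h1, h2]
          ring
      obtain ⟨A', R', hid, hdR', hinv⟩ := ih P' hP'deg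
      refine ⟨A' + h ^ (D + 1 - d) * c * X y ^ k, R', ?_, hdR', ?_⟩
      · have hexp : D + 1 + 1 - d = (D + 1 - d) + 1 := by omega
        rw [hexp, pow_succ]
        calc h ^ (D + 1 - d) * h * P = h ^ (D + 1 - d) * (h * P) := by ring
          _ = h ^ (D + 1 - d) * (P' + c * (X y ^ k * Q)) := by rw [hP']; ring_nf
          _ = h ^ (D + 1 - d) * P' + h ^ (D + 1 - d) * c * X y ^ k * Q := by ring
          _ = A' * Q + R' + h ^ (D + 1 - d) * c * X y ^ k * Q := by
                rw [← hk, hid]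
          _ = (A' + h ^ (D + 1 - d) * c * X y ^ k) * Q + R' := by ring
      · intro z hz
        have hzy : z ≠ y := by
          intro hzy; rw [hzy] at hz; omega
        have hzh : degreeOf z h ≤ 0 := hz ▸ degreeOf_coeffWrt_le y z _ Q
        have hzc : degreeOf z c ≤ degreeOf z P := degreeOf_coeffWrt_le y z _ P
        have hzX : degreeOf z ((X y : MvPolynomial σ K) ^ k) = 0 :=
          degreeOf_X_pow_le z y k hzy
        have hzP' : degreeOf z P' ≤ degreeOf z P := by
          calc degreeOf z P' ≤ max (degreeOf z (h * P))
                (degreeOf z (c * (X y ^ k * Q))) := degreeOf_sub_le _ _ _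
            _ ≤ degreeOf z P := by
                apply max_le
                · calc degreeOf z (h * P) ≤ degreeOf z h + degreeOf z P :=
                        degreeOf_mul_le _ _ _
                    _ ≤ degreeOf z P := by omega
                · calc degreeOf z (c * (X y ^ k * Q)) ≤
                        degreeOf z c + (degreeOf z (X y ^ k) + degreeOf z Q) :=
                        le_trans (degreeOf_mul_le _ _ _)
                          (by
                            have := degreeOf_mul_le z (X y ^ k) Q
                            omega)
                    _ ≤ degreeOf z P := by omega
        exact le_trans (hinv z hz) hzP'

/-- Existence of the pseudo-remainder. -/
theorem isPrem_exists (y : σ) (Q : MvPolynomial σ K) (hd : 0 < degreeOf y Q)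
    (P : MvPolynomial σ K) :
    ∃ R : MvPolynomial σ K, IsPrem y Q P R ∧
      ∀ z, degreeOf z Q = 0 → degreeOf z R ≤ degreeOf z P := by
  obtain ⟨A, R, hid, hdR, hinv⟩ :=
    isPrem_exists_aux y Q hd (degreeOf y P) P (le_refl _)
  exact ⟨R, ⟨A, hid, hdR⟩, hinv⟩

end CharDec
namespace CharDec

variable {K : Type*} [Field K] {σ : Type*} [LinearOrder σ]

open MvPolynomial

theorem mem_satBy {I : Ideal (MvPolynomial σ K)} {J p : MvPolynomial σ K} :
    p ∈ satBy I J ↔ ∃ k : ℕ, J ^ k * p ∈ I := Iff.rfl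

theorem le_satBy (I : Ideal (MvPolynomial σ K)) (J : MvPolynomial σ K) :
    I ≤ satBy I J := fun p hp => ⟨0, by rwa [pow_zero, one_mul]⟩

theorem satBy_absorb {I : Ideal (MvPolynomial σ K)} {J p : MvPolynomial σ K}
    {a : ℕ} (h : J ^ a * p ∈ satBy I J) : p ∈ satBy I J := by
  obtain ⟨k, hk⟩ := h
  refine ⟨k + a, ?_⟩
  have : J ^ (k + a) * p = J ^ k * (J ^ a * p) := by ring
  rwa [this]

theorem satBy_absorb_dvd {I : Ideal (MvPolynomial σ K)} {J g p : MvPolynomial σ K}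
    {N : ℕ} (hg : g ∣ J ^ N) (h : g * p ∈ satBy I J) : p ∈ satBy I J := by
  obtain ⟨w, hw⟩ := hg
  obtain ⟨k, hk⟩ := h
  refine ⟨k + N, ?_⟩
  have : J ^ (k + N) * p = w * (J ^ k * (g * p)) := by rw [pow_add, hw]; ring
  rw [this]
  exact Ideal.mul_mem_left _ _ hk

theorem degreeOf_pos_of_mem_vars {i : σ} {f : MvPolynomial σ K}
    (h : i ∈ f.vars) : 0 < degreeOf i f := by
  classical
  rw [mem_vars] at h
  obtain ⟨m, hm, him⟩ := h
  have h1 : m i ≤ degreeOf i f := degreeOf_le_iff.mp (le_refl _) m hm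
  have h2 : m i ≠ 0 := Finsupp.mem_support_iff.mp him
  omega

theorem ne_zero_of_mem_vars {i : σ} {f : MvPolynomial σ K}
    (h : i ∈ f.vars) : f ≠ 0 := by
  intro h0
  rw [h0] at h
  simp [vars_0] at h

namespace TriSet

theorem ext' {T T' : TriSet K σ} (h : T.elems = T'.elems) : T = T' := by
  cases T; cases T'
  simp only at h
  subst h
  rfl

theorem take_elems (T : TriSet K σ) (i : ℕ) : (T.take i).elems = T.elems.take i :=
  rfl

theorem take_take (T : TriSet K σ) {j i : ℕ} (h : j ≤ i) :
    (T.take i).take j = T.take j := by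
  apply ext'
  simp only [take_elems, List.take_take]
  rw [min_eq_left h]

theorem degreeOf_lv_pos (T : TriSet K σ) {e : σ × MvPolynomial σ K}
    (he : e ∈ T.elems) : 0 < degreeOf e.1 e.2 :=
  degreeOf_pos_of_mem_vars (T.hlv e he).1

theorem poly_ne_zero (T : TriSet K σ) {e : σ × MvPolynomial σ K}
    (he : e ∈ T.elems) : e.2 ≠ 0 :=
  ne_zero_of_mem_vars (T.hlv e he).1

theorem ideal_mono_take (T : TriSet K σ) (i : ℕ) : (T.take i).ideal ≤ T.ideal := by
  apply Ideal.span_mono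
  rintro p ⟨e, he, rfl⟩
  exact ⟨e, List.mem_of_mem_take he, rfl⟩

theorem prodInit_take_dvd (T : TriSet K σ) (i : ℕ) :
    (T.take i).prodInit ∣ T.prodInit := by
  refine ⟨((T.elems.drop i).map fun e => initialWrt e.1 e.2).prod, ?_⟩
  rw [prodInit, prodInit, take_elems]
  rw [← List.prod_append, ← List.map_append, List.take_append_drop]

theorem sat_take_le (T : TriSet K σ) (i : ℕ) : (T.take i).sat ≤ T.sat := by
  intro p hp
  obtain ⟨k, hk⟩ := hp
  obtain ⟨W, hW⟩ := prodInit_take_dvd T i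
  refine ⟨k, ?_⟩
  show T.prodInit ^ k * p ∈ T.ideal
  rw [hW]
  have : ((T.take i).prodInit * W) ^ k * p = W ^ k * ((T.take i).prodInit ^ k * p) := by
    ring
  rw [this]
  exact Ideal.mul_mem_left _ _ (ideal_mono_take T i hk)

theorem regular_take {T : TriSet K σ} (hT : T.Regular) (i : ℕ) :
    (T.take i).Regular := by
  intro j hj
  have hlen : (T.take i).elems.length = min i T.elems.length := by
    simp [take_elems]
  have hj' : j < T.elems.length := by omega
  have hji : j ≤ i := by omega
  have hget : (T.take i).elems.get ⟨j, hj⟩ = T.elems.get ⟨j, hj'⟩ := by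
    simp only [take_elems, List.get_eq_getElem, List.getElem_take]
  rw [hget, take_take T hji]
  exact hT j hj'

/-- Every element in an initial segment has leading variable smaller than
that of any element in the rest. -/
theorem lv_lt_of_take_drop (T : TriSet K σ) (i : ℕ)
    {a b : σ × MvPolynomial σ K} (ha : a ∈ T.elems.take i)
    (hb : b ∈ T.elems.drop i) : a.1 < b.1 := by
  have hsort := T.sorted
  rw [← List.take_append_drop i T.elems] at hsort
  exact ((List.pairwise_append.mp hsort).2.2) a ha b hb

end TriSet

end CharDec
namespace CharDec

variable {K : Type*} [Field K] {σ : Type*} [LinearOrder σ]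

open MvPolynomial

namespace TriSet

theorem degreeOf_later_lv_eq_zero (T : TriSet K σ) {i : ℕ}
    {a b : σ × MvPolynomial σ K} (ha : a ∈ T.elems.take i)
    (hb : b ∈ T.elems.drop i) : degreeOf b.1 a.2 = 0 := by
  by_contra h
  have hpos : 0 < degreeOf b.1 a.2 := Nat.pos_of_ne_zero h
  have hmem : b.1 ∈ a.2.vars := by
    by_contra hv
    have hle0 : degreeOf b.1 a.2 ≤ 0 := by
      rw [degreeOf_le_iff]
      intro m hm
      by_contra hc
      push_neg at hc
      exact hv ((mem_vars _).mpr ⟨m, hm, Finsupp.mem_support_iff.mpr (by omega)⟩)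
    omega
  have hle : b.1 ≤ a.1 := (T.hlv a (List.mem_of_mem_take ha)).2 b.1 hmem
  have hlt : a.1 < b.1 := lv_lt_of_take_drop T i ha hb
  exact absurd hle (not_le.mpr hlt)

theorem take_succ_elems (T : TriSet K σ) {i : ℕ} (hi : i < T.elems.length) :
    (T.take (i + 1)).elems = (T.take i).elems ++ [T.elems.get ⟨i, hi⟩] := by
  simp only [take_elems]
  rw [List.take_succ]
  congr 1
  rw [List.getElem?_eq_getElem hi]
  rfl

theorem prodInit_take_succ (T : TriSet K σ) {i : ℕ} (hi : i < T.elems.length) :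
    (T.take (i + 1)).prodInit =
      (T.take i).prodInit *
        initialWrt (T.elems.get ⟨i, hi⟩).1 (T.elems.get ⟨i, hi⟩).2 := by
  rw [prodInit, prodInit, take_succ_elems T hi, List.map_append, List.prod_append]
  simp

/-- The main chain lemma: iterated pseudo-division terminates in a reduced
polynomial, with controlled degrees and an explicit membership certificate. -/
theorem chain_aux (T : TriSet K σ) (i : ℕ) :
    ∀ F : MvPolynomial σ K, ∃ R g c : MvPolynomial σ K, ∃ N : ℕ,
      IterPrem F ((T.take i).elems).reverse R ∧
      (∀ e ∈ (T.take i).elems, degreeOf e.1 R < degreeOf e.1 e.2) ∧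
      (∀ z : σ, (∀ e ∈ (T.take i).elems, degreeOf z e.2 = 0) →
        degreeOf z R ≤ degreeOf z F) ∧
      g * c = (T.take i).prodInit ^ N ∧
      g * F - R ∈ (T.take i).ideal := by
  induction i with
  | zero =>
    intro F
    refine ⟨F, 1, 1, 0, ?_, ?_, ?_, ?_, ?_⟩
    · simp only [take_elems, List.take_zero, List.reverse_nil]
      rfl
    · intro e he
      simp [take_elems] at he
    · intro z _
      exact le_refl _
    · rw [pow_zero, one_mul]
    · rw [one_mul, sub_self]
      exact Ideal.zero_mem _
  | succ i ih =>
    intro F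
    by_cases hi : i < T.elems.length
    · set e := T.elems.get ⟨i, hi⟩ with he
      set y := e.1
      set f := e.2
      have hemem : e ∈ T.elems := by rw [he]; exact List.get_mem T.elems ⟨i, hi⟩
      have hdpos : 0 < degreeOf y f := T.degreeOf_lv_pos hemem
      obtain ⟨R1, hprem1, hinv1⟩ := isPrem_exists y f hdpos F
      obtain ⟨A, hid, hdR1⟩ := hprem1
      obtain ⟨R, g', c', N', hiter, hred, hinv, hgc, hmem⟩ := ih R1
      set h := initialWrt y f with hh
      set a := degreeOf y F + 1 - degreeOf y f with ha
      have hdropmem : e ∈ T.elems.drop i := by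
        rw [← List.getElem_cons_drop hi]
        exact List.mem_cons_self
      have hyfree : ∀ e' ∈ (T.take i).elems, degreeOf y e'.2 = 0 := by
        intro e' he'
        exact T.degreeOf_later_lv_eq_zero (by rwa [take_elems] at he') hdropmem
      refine ⟨R, g' * h ^ a, c' * (T.take i).prodInit ^ (max N' a - N') * h ^ (max N' a - a),
        max N' a, ?_, ?_, ?_, ?_, ?_⟩
      · rw [take_succ_elems T hi, List.reverse_append, List.reverse_singleton]
        exact ⟨R1, ⟨A, hid, hdR1⟩, hiter⟩
      · intro e' he'
        rw [take_succ_elems T hi, List.mem_append] at he'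
        rcases he' with he' | he'
        · exact hred e' he'
        · rw [List.mem_singleton] at he'
          subst he'
          calc degreeOf y R ≤ degreeOf y R1 := hinv y hyfree
            _ < degreeOf y f := hdR1
      · intro z hz
        have hzf : degreeOf z f = 0 := by
          apply hz
          rw [take_succ_elems T hi, List.mem_append]
          right; exact List.mem_singleton_self _
        have h1 : degreeOf z R1 ≤ degreeOf z F := hinv1 z hzf
        have h2 : degreeOf z R ≤ degreeOf z R1 := by
          apply hinv z
          intro e' he'
          apply hz
          rw [take_succ_elems T hi, List.mem_append]
          left; exact he'
        omega
      · rw [prodInit_take_succ T hi, ← hh, mul_pow]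
        have e1 : g' * h ^ a * (c' * (T.take i).prodInit ^ (max N' a - N') *
            h ^ (max N' a - a)) = (g' * c') * (T.take i).prodInit ^ (max N' a - N') *
            (h ^ a * h ^ (max N' a - a)) := by ring
        rw [e1, hgc, ← pow_add, ← pow_add]
        have e2 : N' + (max N' a - N') = max N' a := by omega
        have e3 : a + (max N' a - a) = max N' a := by omega
        rw [e2, e3]
      · have hfmem : f ∈ (T.take (i + 1)).ideal := by
          apply Ideal.subset_span
          refine ⟨e, ?_, rfl⟩
          rw [take_succ_elems T hi, List.mem_append]
          right; exact List.mem_singleton_self _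
        have hidl : (T.take i).ideal ≤ (T.take (i + 1)).ideal := by
          have := ideal_mono_take (T.take (i + 1)) i
          rwa [take_take T (by omega)] at this
        have key : g' * h ^ a * F - R = g' * A * f + (g' * R1 - R) := by
          have : h ^ a * F = A * f + R1 := hid
          calc g' * h ^ a * F - R = g' * (h ^ a * F) - R := by ring
            _ = g' * (A * f + R1) - R := by rw [this]
            _ = g' * A * f + (g' * R1 - R) := by ring
        rw [key]
        exact Ideal.add_mem _ (Ideal.mul_mem_left _ _ hfmem) (hidl hmem)
    · push_neg at hi
      have : T.take (i + 1) = T.take i := by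
        apply ext'
        simp only [take_elems]
        rw [List.take_of_length_le hi, List.take_of_length_le (by omega)]
      rw [this]
      exact ih F

theorem take_length (T : TriSet K σ) : T.take T.elems.length = T := by
  apply ext'
  simp [take_elems]

theorem chain (T : TriSet K σ) (F : MvPolynomial σ K) :
    ∃ R g c : MvPolynomial σ K, ∃ N : ℕ,
      IterPrem F T.elems.reverse R ∧
      (∀ e ∈ T.elems, degreeOf e.1 R < degreeOf e.1 e.2) ∧
      g * c = T.prodInit ^ N ∧
      g * F - R ∈ T.ideal := by
  obtain ⟨R, g, c, N, h1, h2, _, h4, h5⟩ := chain_aux T T.elems.length F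
  rw [take_length] at h1 h2 h4 h5
  exact ⟨R, g, c, N, h1, h2, h4, h5⟩

end TriSet

end CharDec
namespace CharDec

variable {K : Type*} [Field K] {σ : Type*} [LinearOrder σ]

open MvPolynomial

/-- Ideals spanned by `y`-free polynomials are stable under `coeffWrt y`. -/
theorem coeffWrt_mem_span {y : σ} {S : Set (MvPolynomial σ K)}
    (hS : ∀ s ∈ S, degreeOf y s = 0) {g : MvPolynomial σ K}
    (hg : g ∈ Ideal.span S) (e : ℕ) : coeffWrt y e g ∈ Ideal.span S := by
  induction hg using Submodule.span_induction generalizing e with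
  | mem x h =>
    cases e with
    | zero =>
      rw [coeffWrt_zero_of_degreeOf_eq_zero (hS x h)]
      exact Ideal.subset_span h
    | succ e =>
      rw [coeffWrt_eq_zero_of_degreeOf_lt (by rw [hS x h]; omega)]
      exact Ideal.zero_mem _
  | zero =>
    rw [coeffWrt_zero_poly]
    exact Ideal.zero_mem _
  | add x z hx hz ihx ihz =>
    rw [coeffWrt_add]
    exact Ideal.add_mem _ (ihx e) (ihz e)
  | smul a x hx ih =>
    rw [smul_eq_mul, coeffWrt_mul]
    apply Ideal.sum_mem
    rintro ⟨p1, p2⟩ _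
    exact Ideal.mul_mem_left _ _ (ih p2)

theorem degreeOf_list_prod_eq_zero {y : σ} {l : List (MvPolynomial σ K)}
    (h : ∀ a ∈ l, degreeOf y a = 0) : degreeOf y l.prod = 0 := by
  induction l with
  | nil =>
    rw [List.prod_nil]
    have : (1 : MvPolynomial σ K) = C 1 := by simp
    rw [this]
    exact degreeOf_C 1 y
  | cons a l ih =>
    rw [List.prod_cons]
    have h1 := degreeOf_mul_le y a l.prod
    have h2 := h a (List.mem_cons_self)
    have h3 := ih fun b hb => h b (List.mem_cons_of_mem a hb)
    omega

theorem degreeOf_pow_eq_zero {y : σ} {a : MvPolynomial σ K} (k : ℕ)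
    (h : degreeOf y a = 0) : degreeOf y (a ^ k) = 0 := by
  have h2 := degreeOf_pow_le y a k
  rw [h, Nat.mul_zero] at h2
  omega

namespace TriSet

theorem degreeOf_gen_eq_zero (T : TriSet K σ) {i : ℕ} (hi : i < T.elems.length)
    {a : σ × MvPolynomial σ K} (ha : a ∈ (T.take i).elems) :
    degreeOf (T.elems.get ⟨i, hi⟩).1 a.2 = 0 := by
  apply T.degreeOf_later_lv_eq_zero (by rwa [take_elems] at ha)
  rw [← List.getElem_cons_drop hi]
  exact List.mem_cons_self

theorem degreeOf_prodInit_take (T : TriSet K σ) {i : ℕ} (hi : i < T.elems.length) :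
    degreeOf (T.elems.get ⟨i, hi⟩).1 (T.take i).prodInit = 0 := by
  apply degreeOf_list_prod_eq_zero
  intro a ha
  rw [List.mem_map] at ha
  obtain ⟨e', he', rfl⟩ := ha
  have h1 := degreeOf_coeffWrt_le e'.1 (T.elems.get ⟨i, hi⟩).1 (degreeOf e'.1 e'.2) e'.2
  have h2 := T.degreeOf_gen_eq_zero hi he'
  exact Nat.le_zero.mp (h1.trans h2.le)

theorem ideal_gens_take_zero (T : TriSet K σ) :
    {p : MvPolynomial σ K | ∃ e ∈ (T.take 0).elems, p = e.2} = ∅ := by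
  ext q
  simp [take_elems]

theorem sat_take_zero (T : TriSet K σ) {p : MvPolynomial σ K}
    (hp : p ∈ (T.take 0).sat) : p = 0 := by
  obtain ⟨k, hk⟩ := hp
  have hJ : (T.take 0).prodInit = 1 := by
    rw [prodInit, take_elems]
    simp
  rw [hJ, one_pow, one_mul] at hk
  have : (T.take 0).ideal = ⊥ := by
    rw [ideal, ideal_gens_take_zero, Ideal.span_empty]
  rw [this] at hk
  exact Ideal.mem_bot.mp hk

theorem ideal_gens_take_succ (T : TriSet K σ) {i : ℕ} (hi : i < T.elems.length) :
    {p : MvPolynomial σ K | ∃ e ∈ (T.take (i + 1)).elems, p = e.2} =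
      {p : MvPolynomial σ K | ∃ e ∈ (T.take i).elems, p = e.2} ∪
        {(T.elems.get ⟨i, hi⟩).2} := by
  ext q
  simp only [Set.mem_setOf_eq, Set.mem_union, Set.mem_singleton_iff]
  rw [take_succ_elems T hi]
  constructor
  · rintro ⟨e', he', rfl⟩
    rw [List.mem_append] at he'
    rcases he' with he' | he'
    · exact Or.inl ⟨e', he', rfl⟩
    · rw [List.mem_singleton] at he'
      subst he'
      exact Or.inr rfl
  · rintro (⟨e', he', rfl⟩ | rfl)
    · exact ⟨e', List.mem_append_left _ he', rfl⟩
    · exact ⟨T.elems.get ⟨i, hi⟩, List.mem_append_right _ (List.mem_singleton_self _), rfl⟩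

end TriSet

/-- Iterate regularity of `h` modulo an ideal. -/
theorem regular_pow {I : Ideal (MvPolynomial σ K)} {h : MvPolynomial σ K}
    (hreg : ∀ p : MvPolynomial σ K, h * p ∈ I → p ∈ I) (k : ℕ) :
    ∀ p : MvPolynomial σ K, h ^ k * p ∈ I → p ∈ I := by
  induction k with
  | zero => intro p hp; rwa [pow_zero, one_mul] at hp
  | succ k ih =>
    intro p hp
    apply ih
    apply hreg
    have : h * (h ^ k * p) = h ^ (k + 1) * p := by ring
    rwa [this]

end CharDec
namespace CharDec

variable {K : Type*} [Field K] {σ : Type*} [LinearOrder σ]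

open MvPolynomial

namespace TriSet

/-- **Key lemma**: modulo a regular triangular set, a reduced element of the
saturated ideal is zero. -/
theorem key_aux (T : TriSet K σ) (hreg : T.Regular) :
    ∀ i : ℕ, ∀ p : MvPolynomial σ K, p ∈ (T.take i).sat →
      (∀ e ∈ (T.take i).elems, degreeOf e.1 p < degreeOf e.1 e.2) → p = 0 := by
  intro i
  induction i with
  | zero =>
    intro p hp _
    exact sat_take_zero T hp
  | succ i ih =>
    intro p hp hred
    by_cases hi : i < T.elems.length
    · set e := T.elems.get ⟨i, hi⟩ with hedef
      set y := e.1 with hy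
      set f := e.2 with hf
      set h := initialWrt y f with hh
      set J' := (T.take i).prodInit with hJ'
      have hemem : e ∈ T.elems := by rw [hedef]; exact List.get_mem T.elems ⟨i, hi⟩
      have hemem1 : e ∈ (T.take (i + 1)).elems := by
        rw [take_succ_elems T hi]
        exact List.mem_append_right _ (List.mem_singleton_self _)
      have hdf : 0 < degreeOf y f := T.degreeOf_lv_pos hemem
      have hyJ' : degreeOf y J' = 0 := degreeOf_prodInit_take T hi
      have hyh : degreeOf y h = 0 := degreeOf_initialWrt_self y f
      have hregi := hreg i hi
      obtain ⟨k, hk⟩ := hp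
      have hJsucc : (T.take (i + 1)).prodInit = J' * h := prodInit_take_succ T hi
      have hspan : (T.take (i + 1)).ideal = (T.take i).ideal ⊔ Ideal.span {f} := by
        rw [ideal, ideal, ideal_gens_take_succ T hi, Ideal.span_union]
      rw [hJsucc, hspan] at hk
      obtain ⟨u, hu, v, hv, huv⟩ := Submodule.mem_sup.mp hk
      obtain ⟨q, hq⟩ := Ideal.mem_span_singleton'.mp hv
      have hid : (J' * h) ^ k * p = u + q * f := by rw [← huv, hq]
      have hyJh : degreeOf y ((J' * h) ^ k) = 0 := by
        apply degreeOf_pow_eq_zero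
        have := degreeOf_mul_le y J' h
        omega
      have hpy : degreeOf y p < degreeOf y f := hred e hemem1
      have hSfree : ∀ s ∈ {r : MvPolynomial σ K | ∃ e' ∈ (T.take i).elems, r = e'.2},
          degreeOf y s = 0 := by
        rintro s ⟨e', he', rfl⟩
        exact T.degreeOf_gen_eq_zero hi he'
      have hugen : ∀ E : ℕ, coeffWrt y E u ∈ (T.take i).ideal := fun E =>
        coeffWrt_mem_span hSfree hu E
      have hdh : coeffWrt y (degreeOf y f) f = h := rfl
      -- all coefficients of q lie in the saturated ideal of the prefix
      have hq_coeff : ∀ t j : ℕ, degreeOf y q < j + t →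
          coeffWrt y j q ∈ (T.take i).sat := by
        intro t
        induction t with
        | zero =>
          intro j hj
          rw [coeffWrt_eq_zero_of_degreeOf_lt (by omega)]
          exact Ideal.zero_mem _
        | succ t iht =>
          intro j hj
          by_cases hjt : degreeOf y q < j + t
          · exact iht j hjt
          · set E := j + degreeOf y f with hE
            have hEp : coeffWrt y E ((J' * h) ^ k * p) = 0 := by
              rw [coeffWrt_mul_left E p hyJh,
                coeffWrt_eq_zero_of_degreeOf_lt (by omega), mul_zero]
            have hEu : coeffWrt y E u ∈ (T.take i).sat :=
              le_satBy _ _ (hugen E)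
            have hEqf : coeffWrt y E (q * f) ∈ (T.take i).sat := by
              have hcong := congrArg (coeffWrt y E) hid
              rw [hEp, coeffWrt_add] at hcong
              have hzero : coeffWrt y E (q * f) = - coeffWrt y E u := by
                rw [eq_comm, neg_eq_iff_add_eq_zero]
                exact hcong.symm
              rw [hzero]
              exact neg_mem hEu
            have hmemj : (j, degreeOf y f) ∈ Finset.HasAntidiagonal.antidiagonal E :=
              Finset.HasAntidiagonal.mem_antidiagonal.mpr rfl
            have hsplit : coeffWrt y E (q * f) =
                coeffWrt y j q * h +
                  ∑ r ∈ (Finset.HasAntidiagonal.antidiagonal E).erase (j, degreeOf y f),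
                    coeffWrt y r.1 q * coeffWrt y r.2 f := by
              rw [coeffWrt_mul, ← Finset.add_sum_erase _ _ hmemj, hdh]
            have hrest : ∑ r ∈ (Finset.HasAntidiagonal.antidiagonal E).erase (j, degreeOf y f),
                coeffWrt y r.1 q * coeffWrt y r.2 f ∈ (T.take i).sat := by
              apply Ideal.sum_mem
              rintro ⟨a, b⟩ hr
              have hne := (Finset.mem_erase.mp hr).1
              have hab := Finset.HasAntidiagonal.mem_antidiagonal.mp (Finset.mem_erase.mp hr).2
              rcases lt_trichotomy a j with hlt | heq | hgt
              · have hbd : degreeOf y f < b := by omega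
                rw [coeffWrt_eq_zero_of_degreeOf_lt (i := y) (f := f) (by omega),
                  mul_zero]
                exact Ideal.zero_mem _
              · exfalso; apply hne
                have : b = degreeOf y f := by omega
                simp [heq, this]
              · exact Ideal.mul_mem_right _ _ (iht a (by omega))
            have hjq : coeffWrt y j q * h ∈ (T.take i).sat := by
              have := Ideal.sub_mem _ hEqf hrest
              rw [hsplit] at this
              simpa using this
            apply hregi.2
            rwa [mul_comm] at hjq
      have hqI : q ∈ (T.take i).sat := by
        rw [coeffWrt_decomposition y q]
        apply Ideal.sum_mem
        intro j _
        exact Ideal.mul_mem_right _ _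
          (hq_coeff (degreeOf y q + 1) j (by omega))
      have hmemI : (J' * h) ^ k * p ∈ (T.take i).sat := by
        rw [hid]
        exact Ideal.add_mem _ (le_satBy _ _ hu) (Ideal.mul_mem_right _ _ hqI)
      have hJk : J' ^ k * p ∈ (T.take i).sat := by
        apply regular_pow hregi.2 k
        have heq : h ^ k * (J' ^ k * p) = (J' * h) ^ k * p := by
          rw [mul_pow]; ring
        rwa [heq]
      have hpI : p ∈ (T.take i).sat := satBy_absorb hJk
      apply ih p hpI
      intro e' he'
      apply hred
      rw [take_succ_elems T hi]
      exact List.mem_append_left _ he'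
    · push_neg at hi
      have heq : T.take (i + 1) = T.take i := by
        apply ext'
        simp only [take_elems]
        rw [List.take_of_length_le hi, List.take_of_length_le (by omega)]
      rw [heq] at hp hred
      exact ih p hp hred

theorem key (T : TriSet K σ) (hreg : T.Regular) {p : MvPolynomial σ K}
    (hp : p ∈ T.sat)
    (hred : ∀ e ∈ T.elems, degreeOf e.1 p < degreeOf e.1 e.2) : p = 0 := by
  apply key_aux T hreg T.elems.length p
  · rwa [take_length]
  · rwa [take_length]

end TriSet

end CharDec
namespace CharDec

variable {K : Type*} [Field K] {σ : Type*} [LinearOrder σ]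

open MvPolynomial

theorem iterPrem_unique_list {L : List (σ × MvPolynomial σ K)}
    (hL : ∀ e ∈ L, e.2 ≠ 0) :
    ∀ {F R R' : MvPolynomial σ K}, IterPrem F L R → IterPrem F L R' → R = R' := by
  induction L with
  | nil =>
    intro F R R' h1 h2
    rw [show R = F from h1, show R' = F from h2]
  | cons e L ihL =>
    rintro F R R' ⟨S, hS, h1⟩ ⟨S', hS', h2⟩
    have hSS : S = S' := isPrem_unique (hL e (List.mem_cons_self)) hS hS'
    subst hSS
    exact ihL (fun e' he' => hL e' (List.mem_cons_of_mem e he')) h1 h2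

theorem iterPrem_reduced_list {L : List (σ × MvPolynomial σ K)}
    {p : MvPolynomial σ K}
    (hred : ∀ e ∈ L, degreeOf e.1 p < degreeOf e.1 e.2) : IterPrem p L p := by
  induction L with
  | nil => rfl
  | cons e L ihL =>
    exact ⟨p, isPrem_self (hred e (List.mem_cons_self)),
      ihL fun e' he' => hred e' (List.mem_cons_of_mem e he')⟩

namespace TriSet

theorem elems_reverse_ne_zero (T : TriSet K σ) :
    ∀ e ∈ T.elems.reverse, e.2 ≠ 0 := fun e he =>
  T.poly_ne_zero (List.mem_reverse.mp he)

/-- `prem(F, T) = 0` implies `F ∈ sat(T)` (no regularity needed). -/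
theorem mem_sat_of_iterPrem_zero (T : TriSet K σ) {F : MvPolynomial σ K}
    (h : IterPrem F T.elems.reverse 0) : F ∈ T.sat := by
  obtain ⟨R, g, c, N, hiter, hred, hgc, hmem⟩ := chain T F
  have hR0 : R = 0 := iterPrem_unique_list T.elems_reverse_ne_zero hiter h
  rw [hR0, sub_zero] at hmem
  refine ⟨N, ?_⟩
  rw [← hgc]
  have : g * c * F = c * (g * F) := by ring
  rw [this]
  exact Ideal.mul_mem_left _ _ hmem

/-- For a regular triangular set, `F ∈ sat(T)` implies `prem(F, T) = 0`. -/
theorem iterPrem_zero_of_mem_sat (T : TriSet K σ) (hreg : T.Regular)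
    {F : MvPolynomial σ K} (hF : F ∈ T.sat) : IterPrem F T.elems.reverse 0 := by
  obtain ⟨R, g, c, N, hiter, hred, hgc, hmem⟩ := chain T F
  have hRsat : R ∈ T.sat := by
    have h1 : g * F ∈ T.sat := Ideal.mul_mem_left _ _ hF
    have h2 : g * F - R ∈ T.sat := le_satBy _ _ hmem
    have h3 : R = g * F - (g * F - R) := by ring
    rw [h3]
    exact Ideal.sub_mem _ h1 h2
  have hR0 : R = 0 := key T hreg hRsat hred
  rwa [hR0] at hiter

end TriSet

/-- coeffWrt-stability of saturations with free generators and multiplier. -/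
theorem coeffWrt_mem_satBy {y : σ} {S : Set (MvPolynomial σ K)}
    {J : MvPolynomial σ K}
    (hS : ∀ s ∈ S, degreeOf y s = 0) (hJ : degreeOf y J = 0)
    {g : MvPolynomial σ K} (hg : g ∈ satBy (Ideal.span S) J) (e : ℕ) :
    coeffWrt y e g ∈ satBy (Ideal.span S) J := by
  obtain ⟨k, hk⟩ := hg
  refine ⟨k, ?_⟩
  rw [← coeffWrt_mul_left e g (degreeOf_pow_eq_zero k hJ)]
  exact coeffWrt_mem_span hS hk e

end CharDec
namespace CharDec

variable {K : Type*} [Field K] {σ : Type*} [LinearOrder σ]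

open MvPolynomial

theorem degreeOf_one (z : σ) : degreeOf z (1 : MvPolynomial σ K) = 0 := by
  have : (1 : MvPolynomial σ K) = C 1 := by simp
  rw [this]
  exact degreeOf_C 1 z

/-- Strip away a list of variables while keeping (non-)membership data. -/
theorem strip_aux {S : Set (MvPolynomial σ K)} {J h : MvPolynomial σ K}
    (ds : List (σ × MvPolynomial σ K)) :
    ∀ P : MvPolynomial σ K → Prop,
      (∀ (z : σ) (E : ℕ) (p : MvPolynomial σ K), P p → P (coeffWrt z E p)) →
      (∀ b ∈ ds, (∀ s ∈ S, degreeOf b.1 s = 0) ∧ degreeOf b.1 J = 0 ∧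
        degreeOf b.1 h = 0) →
      ∀ ρ : MvPolynomial σ K, ρ ∉ satBy (Ideal.span S) J →
        h * ρ ∈ satBy (Ideal.span S) J → P ρ →
      ∃ τ : MvPolynomial σ K, τ ∉ satBy (Ideal.span S) J ∧
        h * τ ∈ satBy (Ideal.span S) J ∧ P τ ∧
        ∀ b ∈ ds, degreeOf b.1 τ = 0 := by
  induction ds with
  | nil => exact fun P _ _ ρ h1 h2 h3 => ⟨ρ, h1, h2, h3, by simp⟩
  | cons b ds ih =>
    intro P hP hfree ρ h1 h2 h3
    obtain ⟨hSz, hJz, hhz⟩ := hfree b (List.mem_cons_self)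
    have hex : ∃ E, coeffWrt b.1 E ρ ∉ satBy (Ideal.span S) J := by
      by_contra hall
      push_neg at hall
      apply h1
      rw [coeffWrt_decomposition b.1 ρ]
      exact Ideal.sum_mem _ fun E _ => Ideal.mul_mem_right _ _ (hall E)
    obtain ⟨E, hE⟩ := hex
    have hhρ' : h * coeffWrt b.1 E ρ ∈ satBy (Ideal.span S) J := by
      rw [← coeffWrt_mul_left E ρ hhz]
      exact coeffWrt_mem_satBy hSz hJz h2 E
    obtain ⟨τ, t1, t2, ⟨t3, t4⟩, t5⟩ :=
      ih (fun p => P p ∧ degreeOf b.1 p = 0)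
        (fun z' E' p hp => ⟨hP z' E' p hp.1, by
          have := degreeOf_coeffWrt_le z' b.1 E' p
          omega⟩)
        (fun b' hb' => hfree b' (List.mem_cons_of_mem _ hb'))
        (coeffWrt b.1 E ρ) hE hhρ'
        ⟨hP b.1 E ρ h3, degreeOf_coeffWrt_self b.1 E ρ⟩
    refine ⟨τ, t1, t2, t3, ?_⟩
    intro b' hb'
    rcases List.mem_cons.mp hb' with rfl | hb'
    · exact t4
    · exact t5 b' hb'

namespace TriSet

theorem degreeOf_prodInit_take_drop (T : TriSet K σ) {i : ℕ}
    {b : σ × MvPolynomial σ K} (hb : b ∈ T.elems.drop i) :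
    degreeOf b.1 (T.take i).prodInit = 0 := by
  apply degreeOf_list_prod_eq_zero
  intro a ha
  rw [List.mem_map] at ha
  obtain ⟨e', he', rfl⟩ := ha
  have h1 := degreeOf_coeffWrt_le e'.1 b.1 (degreeOf e'.1 e'.2) e'.2
  have h2 : degreeOf b.1 e'.2 = 0 :=
    T.degreeOf_later_lv_eq_zero (by rwa [take_elems] at he') hb
  exact Nat.le_zero.mp (h1.trans h2.le)

/-- If `T` is not regular, some element of `sat(T)` has nonzero
pseudo-remainder. -/
theorem not_regular_witness (T : TriSet K σ) (hnreg : ¬ T.Regular) :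
    ∃ F : MvPolynomial σ K, F ∈ T.sat ∧ ¬ IterPrem F T.elems.reverse 0 := by
  classical
  set Bad : ℕ → Prop := fun i => ∃ h : i < T.elems.length,
    ¬(initialWrt (T.elems.get ⟨i, h⟩).1 (T.elems.get ⟨i, h⟩).2 ∉ (T.take i).sat ∧
      ∀ p : MvPolynomial σ K,
        initialWrt (T.elems.get ⟨i, h⟩).1 (T.elems.get ⟨i, h⟩).2 * p ∈ (T.take i).sat →
          p ∈ (T.take i).sat) with hBad
  have hex : ∃ i, Bad i := by
    by_contra hno
    push_neg at hno
    apply hnreg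
    intro i hlen
    by_contra hc
    exact hno i ⟨hlen, hc⟩
  set i₀ := Nat.find hex with hi₀
  obtain ⟨hlen, hbad⟩ := Nat.find_spec hex
  -- all conditions below i₀ hold
  have hmin : ∀ j, j < i₀ → ∀ hj : j < T.elems.length,
      initialWrt (T.elems.get ⟨j, hj⟩).1 (T.elems.get ⟨j, hj⟩).2 ∉ (T.take j).sat ∧
      ∀ p : MvPolynomial σ K,
        initialWrt (T.elems.get ⟨j, hj⟩).1 (T.elems.get ⟨j, hj⟩).2 * p ∈ (T.take j).sat →
          p ∈ (T.take j).sat := by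
    intro j hji hj
    have := Nat.find_min hex hji
    by_contra hc
    exact this ⟨hj, hc⟩
  set e := T.elems.get ⟨i₀, hlen⟩ with hedef
  set y := e.1 with hy
  set f := e.2 with hf
  set h := initialWrt y f with hh
  set J' := (T.take i₀).prodInit with hJ'
  have hemem : e ∈ T.elems := by rw [hedef]; exact List.get_mem T.elems ⟨i₀, hlen⟩
  have hdrope : e ∈ T.elems.drop i₀ := by
    rw [← List.getElem_cons_drop hlen]
    exact List.mem_cons_self
  -- divisibility of the full product of initials
  obtain ⟨W, hW⟩ := prodInit_take_dvd T (i₀ + 1)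
  have hJsucc : (T.take (i₀ + 1)).prodInit = J' * h := prodInit_take_succ T hlen
  rw [hJsucc] at hW
  -- reduced fixed point machinery
  have hfix : ∀ τ : MvPolynomial σ K, τ ≠ 0 →
      (∀ e' ∈ T.elems, degreeOf e'.1 τ < degreeOf e'.1 e'.2) →
      ¬ IterPrem τ T.elems.reverse 0 := by
    intro τ hτ hred hzero
    have h1 : IterPrem τ T.elems.reverse τ :=
      iterPrem_reduced_list fun e' he' => hred e' (List.mem_reverse.mp he')
    exact hτ (iterPrem_unique_list T.elems_reverse_ne_zero hzero h1).symm
  by_cases hA : h ∈ (T.take i₀).sat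
  · -- degenerate case : 1 ∈ sat(T)
    obtain ⟨m, hm⟩ := hA
    refine ⟨1, ⟨m + 1, ?_⟩, ?_⟩
    · rw [mul_one, hW]
      have : (J' * h * W) ^ (m + 1) =
          (J' * h ^ m * W ^ (m + 1)) * (J' ^ m * h) := by ring
      rw [this]
      exact Ideal.mul_mem_left _ _ (ideal_mono_take T i₀ hm)
    · apply hfix 1 one_ne_zero
      intro e' he'
      rw [degreeOf_one]
      exact T.degreeOf_lv_pos he'
  · have hBfail : ¬ ∀ p : MvPolynomial σ K,
        h * p ∈ (T.take i₀).sat → p ∈ (T.take i₀).sat := by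
      intro hB
      exact hbad ⟨hA, hB⟩
    push_neg at hBfail
    obtain ⟨p, hp1, hp2⟩ := hBfail
    -- reduce p modulo the prefix
    obtain ⟨ρ, g, c, N, hiter, hred, hgc, hmem⟩ := chain (T.take i₀) p
    have hρnot : ρ ∉ (T.take i₀).sat := by
      intro hρ
      apply hp2
      have h1 : g * p ∈ (T.take i₀).sat := by
        have h2 : g * p - ρ ∈ (T.take i₀).sat := le_satBy _ _ hmem
        have h3 : g * p = (g * p - ρ) + ρ := by ring
        rw [h3]
        exact Ideal.add_mem _ h2 hρ
      exact satBy_absorb_dvd ⟨c, hgc.symm⟩ h1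
    have hhρ : h * ρ ∈ (T.take i₀).sat := by
      have h1 : g * (h * p) ∈ (T.take i₀).sat := Ideal.mul_mem_left _ _ hp1
      have h2 : h * (g * p - ρ) ∈ (T.take i₀).sat :=
        Ideal.mul_mem_left _ _ (le_satBy _ _ hmem)
      have h3 : h * ρ = g * (h * p) - h * (g * p - ρ) := by ring
      rw [h3]
      exact Ideal.sub_mem _ h1 h2
    -- strip the variables at or above y
    have hfree : ∀ b ∈ T.elems.drop i₀,
        (∀ s ∈ {r : MvPolynomial σ K | ∃ e' ∈ (T.take i₀).elems, r = e'.2},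
          degreeOf b.1 s = 0) ∧
        degreeOf b.1 J' = 0 ∧ degreeOf b.1 h = 0 := by
      intro b hb
      refine ⟨?_, T.degreeOf_prodInit_take_drop hb, ?_⟩
      · rintro s ⟨e', he', rfl⟩
        exact T.degreeOf_later_lv_eq_zero (by rwa [take_elems] at he') hb
      · rw [← List.getElem_cons_drop hlen] at hb
        rcases List.mem_cons.mp hb with heq | hb'
        · rw [heq]
          exact degreeOf_initialWrt_self y f
        · have hfe : degreeOf b.1 f = 0 := by
            apply T.degreeOf_later_lv_eq_zero (i := i₀ + 1) _ hb'
            have : e ∈ (T.take (i₀ + 1)).elems := by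
              rw [take_succ_elems T hlen]
              exact List.mem_append_right _ (List.mem_singleton_self _)
            rwa [take_elems] at this
          have hcle := degreeOf_coeffWrt_le y b.1 (degreeOf y f) f
          have hunf : h = coeffWrt y (degreeOf y f) f := rfl
          rw [hunf]
          omega
    obtain ⟨τ, t1, t2, t3, t5⟩ :=
      strip_aux (S := {r : MvPolynomial σ K | ∃ e' ∈ (T.take i₀).elems, r = e'.2})
        (J := J') (h := h) (T.elems.drop i₀)
        (fun τ => ∀ e' ∈ (T.take i₀).elems, degreeOf e'.1 τ < degreeOf e'.1 e'.2)
        (fun z E q hq e' he' =>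
          lt_of_le_of_lt (degreeOf_coeffWrt_le z e'.1 E q) (hq e' he'))
        hfree ρ hρnot hhρ hred
    have hτ0 : τ ≠ 0 := by
      intro h0
      exact t1 (h0 ▸ Ideal.zero_mem _)
    refine ⟨τ, ?_, ?_⟩
    · obtain ⟨m, hm⟩ := t2
      refine ⟨m + 1, ?_⟩
      rw [hW]
      have : (J' * h * W) ^ (m + 1) * τ =
          (J' * h ^ m * W ^ (m + 1)) * (J' ^ m * (h * τ)) := by ring
      rw [this]
      exact Ideal.mul_mem_left _ _ (ideal_mono_take T i₀ hm)
    · apply hfix τ hτ0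
      intro e' he'
      rw [← List.take_append_drop i₀ T.elems] at he'
      rcases List.mem_append.mp he' with he' | he'
      · exact t3 e' (by rwa [take_elems])
      · rw [t5 e' he']
        exact T.degreeOf_lv_pos (by
          rw [← List.take_append_drop i₀ T.elems]
          exact List.mem_append_right _ he')

end TriSet

end CharDec
namespace CharDec

variable {K : Type*} [Field K] {σ : Type*} [LinearOrder σ]

open MvPolynomial

/-- The general equivalence: `T` is regular iff the set of polynomials with
zero pseudo-remainder equals `sat(T)`. -/
theorem TriSet.regular_iff_premZero_eq_sat (T : TriSet K σ) :
    T.Regular ↔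
      {F : MvPolynomial σ K | IterPrem F T.elems.reverse 0} = ↑T.sat := by
  constructor
  · intro hreg
    ext F
    simp only [Set.mem_setOf_eq, SetLike.mem_coe]
    exact ⟨T.mem_sat_of_iterPrem_zero, T.iterPrem_zero_of_mem_sat hreg⟩
  · intro heq
    by_contra hnreg
    obtain ⟨F, hF, hnot⟩ := T.not_regular_witness hnreg
    apply hnot
    have : F ∈ {F : MvPolynomial σ K | IterPrem F T.elems.reverse 0} := by
      rw [heq]
      exact hF
    exact this

theorem mem_vars_of_degreeOf_pos {i : σ} {f : MvPolynomial σ K}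
    (h : 0 < degreeOf i f) : i ∈ f.vars := by
  classical
  by_contra hv
  have hle0 : degreeOf i f ≤ 0 := by
    rw [degreeOf_le_iff]
    intro m hm
    by_contra hc
    push_neg at hc
    exact hv ((mem_vars _).mpr ⟨m, hm, Finsupp.mem_support_iff.mpr (by omega)⟩)
  omega

theorem coeffWrt_monomial_self (i : σ) (s : σ →₀ ℕ) (a : K) :
    coeffWrt i (s i) (monomial s a) = monomial (s.update i 0) a := by
  classical
  ext m
  rw [coeff_coeffWrt, coeff_monomial]
  by_cases hm : m i = 0
  · rw [if_pos hm, coeff_monomial]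
    by_cases heq : s.update i 0 = m
    · rw [if_pos heq, if_pos]
      rw [← heq, Finsupp.update_idem, Finsupp.update_self]
    · rw [if_neg heq, if_neg]
      intro hc
      apply heq
      rw [hc, Finsupp.update_idem, update_zero_of_apply_zero hm]
  · rw [if_neg hm, coeff_monomial, if_neg]
    intro hc
    apply hm
    rw [← hc]
    simp [Finsupp.coe_update]

theorem initialWrt_monomial (i : σ) (s : σ →₀ ℕ) {a : K} (ha : a ≠ 0) :
    initialWrt i (monomial s a) = monomial (s.update i 0) a := by
  classical
  rw [initialWrt, degreeOf_monomial_eq s i ha, coeffWrt_monomial_self]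

end CharDec
namespace CharDec

open MvPolynomial

section Counterexample

noncomputable abbrev cf1 : MvPolynomial (Fin 3) ℚ := X 1 ^ 2
noncomputable abbrev cf2 : MvPolynomial (Fin 3) ℚ := X 1 * X 2 + X 0

theorem cf1_monomial : cf1 = monomial (Finsupp.single 1 2) 1 := by
  rw [cf1, X_pow_eq_monomial]

theorem X_eq_monomial (i : Fin 3) :
    (X i : MvPolynomial (Fin 3) ℚ) = monomial (Finsupp.single i 1) 1 := by
  rw [← pow_one (X i : MvPolynomial (Fin 3) ℚ), X_pow_eq_monomial]

theorem cf2_monomial :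
    cf2 = monomial (Finsupp.single 1 1 + Finsupp.single 2 1) 1 +
      monomial (Finsupp.single 0 1) 1 := by
  rw [cf2, X_eq_monomial 1, X_eq_monomial 2, X_eq_monomial 0, monomial_mul, mul_one]

theorem hd1cf1 : degreeOf 1 cf1 = 2 := by
  rw [cf1_monomial, degreeOf_monomial_eq _ _ (one_ne_zero)]
  simp

theorem hd2cf1 : degreeOf 2 cf1 = 0 := by
  rw [cf1_monomial, degreeOf_monomial_eq _ _ (one_ne_zero)]
  simp [Finsupp.single_apply]

theorem hd0cf1 : degreeOf 0 cf1 = 0 := by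
  rw [cf1_monomial, degreeOf_monomial_eq _ _ (one_ne_zero)]
  simp [Finsupp.single_apply]

theorem hs1_apply2 : (Finsupp.single 1 1 + Finsupp.single 2 1 : Fin 3 →₀ ℕ) 2 = 1 := by
  simp [Finsupp.single_apply]

theorem hcoeff_cf2 :
    coeff (Finsupp.single 1 1 + Finsupp.single 2 1) cf2 = 1 := by
  rw [cf2_monomial, coeff_add, coeff_monomial, coeff_monomial, if_pos rfl, if_neg]
  · norm_num
  · intro hc
    have := congrArg (fun s : Fin 3 →₀ ℕ => s 0) hc
    simp [Finsupp.single_apply] at this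

theorem hd2cf2 : degreeOf 2 cf2 = 1 := by
  apply le_antisymm
  · rw [cf2_monomial]
    have h1 := degreeOf_add_le 2
      (monomial (Finsupp.single 1 1 + Finsupp.single 2 1) (1 : ℚ) : MvPolynomial (Fin 3) ℚ)
      (monomial (Finsupp.single 0 1) (1 : ℚ) : MvPolynomial (Fin 3) ℚ)
    have h2 : degreeOf 2
        (monomial (Finsupp.single 1 1 + Finsupp.single 2 1) (1 : ℚ) : MvPolynomial (Fin 3) ℚ) = 1 := by
      rw [degreeOf_monomial_eq _ _ (one_ne_zero)]
      exact hs1_apply2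
    have h3 : degreeOf 2
        (monomial (Finsupp.single 0 1) (1 : ℚ) : MvPolynomial (Fin 3) ℚ) = 0 := by
      rw [degreeOf_monomial_eq _ _ (one_ne_zero)]
      simp [Finsupp.single_apply]
    omega
  · have hmem : (Finsupp.single 1 1 + Finsupp.single 2 1 : Fin 3 →₀ ℕ) ∈ cf2.support := by
      rw [mem_support_iff, hcoeff_cf2]
      norm_num
    have := degreeOf_le_iff.mp (le_refl (degreeOf 2 cf2)) _ hmem
    rw [hs1_apply2] at this
    exact this

theorem hcf1_ne : cf1 ≠ 0 := pow_ne_zero _ (X_ne_zero 1)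

theorem hcf2_ne : cf2 ≠ 0 :=
  ne_zero_of_mem_vars (mem_vars_of_degreeOf_pos (by rw [hd2cf2]; omega))

theorem hinit1 : initialWrt 1 cf1 = 1 := by
  rw [cf1_monomial, initialWrt_monomial _ _ (one_ne_zero)]
  have : (Finsupp.single 1 2 : Fin 3 →₀ ℕ).update 1 0 = 0 := by
    ext w
    by_cases hw : w = 1
    · subst hw; simp [Finsupp.coe_update]
    · simp [Finsupp.coe_update, Function.update_apply, hw, Finsupp.single_apply, Ne.symm hw]
  rw [this, monomial_zero', C_1]

theorem hinit2 : initialWrt 2 cf2 = X 1 := by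
  rw [initialWrt, hd2cf2, cf2_monomial, coeffWrt_add]
  have h1 : coeffWrt 2 1
      (monomial (Finsupp.single 1 1 + Finsupp.single 2 1) (1 : ℚ) : MvPolynomial (Fin 3) ℚ) =
      monomial (Finsupp.single 1 1) 1 := by
    have hgen := coeffWrt_monomial_self (K := ℚ) (σ := Fin 3) 2
      (Finsupp.single 1 1 + Finsupp.single 2 1) 1
    rw [hs1_apply2] at hgen
    have hupd : (Finsupp.single 1 1 + Finsupp.single 2 1 : Fin 3 →₀ ℕ).update 2 0 =
        Finsupp.single 1 1 := by
      ext w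
      by_cases hw : w = 2
      · subst hw
        simp [Finsupp.coe_update, Finsupp.single_apply]
      · simp [Finsupp.coe_update, Function.update_apply, hw, Finsupp.add_apply,
          Finsupp.single_apply, Ne.symm hw]
    rw [hgen, hupd]
  have h2 : coeffWrt 2 1
      (monomial (Finsupp.single 0 1) (1 : ℚ) : MvPolynomial (Fin 3) ℚ) = 0 := by
    apply coeffWrt_eq_zero_of_degreeOf_lt
    rw [degreeOf_monomial_eq _ _ (one_ne_zero)]
    simp [Finsupp.single_apply]
  rw [h1, h2, add_zero, ← X_eq_monomial]

/-- The concrete irregular triangular set. -/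
noncomputable def Tex : TriSet ℚ (Fin 3) where
  elems := [(1, cf1), (2, cf2)]
  sorted := by
    refine List.Pairwise.cons ?_ (List.pairwise_singleton _ _)
    intro b hb
    rw [List.mem_singleton] at hb
    subst hb
    decide
  hlv := by
    intro e he
    rcases List.mem_cons.mp he with rfl | he
    · constructor
      · exact mem_vars_of_degreeOf_pos (by rw [hd1cf1]; omega)
      · intro j hj
        have h2j : j ≠ 2 := by
          rintro rfl
          have := degreeOf_pos_of_mem_vars hj
          rw [hd2cf1] at this
          omega
        have hval : j.val ≠ 2 := fun hc => h2j (Fin.ext hc)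
        have hlt3 := j.isLt
        rw [Fin.le_def]
        have hone : ((1 : Fin 3) : ℕ) = 1 := rfl
        rw [hone]
        omega
    · rw [List.mem_singleton] at he
      subst he
      constructor
      · exact mem_vars_of_degreeOf_pos (by rw [hd2cf2]; omega)
      · intro j _
        have h2 : (2 : Fin 3) = Fin.last 2 := rfl
        rw [h2]
        exact Fin.le_last j

theorem Tex_rev : Tex.elems.reverse = [(2, cf2), (1, cf1)] := rfl

theorem Tex_not_regular : ¬ Tex.Regular := by
  intro hreg
  have hlt : 1 < Tex.elems.length := by norm_num [Tex]
  obtain ⟨h1, h2⟩ := hreg 1 hlt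
  have hget : Tex.elems.get ⟨1, hlt⟩ = (2, cf2) := rfl
  rw [hget] at h2
  -- the saturated ideal of the prefix is the span of cf1
  have htake : (Tex.take 1).elems = [(1, cf1)] := rfl
  have hprod : (Tex.take 1).prodInit = 1 := by
    rw [TriSet.prodInit, htake]
    simp [hinit1]
  have hideal : (Tex.take 1).ideal = Ideal.span {cf1} := by
    rw [TriSet.ideal, htake]
    congr 1
    ext q
    simp
  have hsat : ∀ p : MvPolynomial (Fin 3) ℚ,
      p ∈ (Tex.take 1).sat ↔ cf1 ∣ p := by
    intro p
    constructor
    · rintro ⟨k, hk⟩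
      rw [hprod, one_pow, one_mul, hideal, Ideal.mem_span_singleton] at hk
      exact hk
    · intro hdvd
      exact ⟨0, by
        rw [hprod, one_pow, one_mul, hideal, Ideal.mem_span_singleton]
        exact hdvd⟩
  have hX1 : X 1 ∈ (Tex.take 1).sat := by
    apply h2
    rw [hinit2, hsat]
    exact ⟨1, by rw [cf1]; ring⟩
  rw [hsat] at hX1
  obtain ⟨c, hc⟩ := hX1
  have hcne : c ≠ 0 := by
    intro h0
    rw [h0, mul_zero] at hc
    exact X_ne_zero 1 hc
  have hdeg := congrArg (degreeOf 1) hc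
  rw [degreeOf_mul_eq 1 hcf1_ne hcne, hd1cf1] at hdeg
  have hX1d : degreeOf 1 (X 1 : MvPolynomial (Fin 3) ℚ) = 1 := by
    classical
    rw [degreeOf_X]
    simp
  rw [hX1d] at hdeg
  omega

theorem Tex_premP : IterPrem cf2 Tex.elems.reverse 0 := by
  rw [Tex_rev]
  refine ⟨0, ⟨initialWrt 2 cf2, ?_, ?_⟩, 0, ⟨0, by simp, ?_⟩, rfl⟩
  · have he : degreeOf 2 cf2 + 1 - degreeOf 2 cf2 = 1 := by omega
    rw [he, pow_one, add_zero]
  · rw [degreeOf_zero, hd2cf2]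
    omega
  · rw [degreeOf_zero, hd1cf1]
    omega

/-- `Q = X 1 - cf2`. -/
theorem Tex_premQ : IterPrem (X 1 - cf2) Tex.elems.reverse 0 := by
  rw [Tex_rev]
  have hd2Q : degreeOf 2 (X 1 - cf2) = 1 := by
    apply le_antisymm
    · have h1 := degreeOf_sub_le 2 (X 1 : MvPolynomial (Fin 3) ℚ) cf2
      have h2 : degreeOf 2 (X 1 : MvPolynomial (Fin 3) ℚ) = 0 := by
        classical
        rw [degreeOf_X]
        simp
      rw [h2, hd2cf2] at h1
      omega
    · have hco : coeff (Finsupp.single 1 1 + Finsupp.single 2 1) (X 1 - cf2) = -1 := by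
        rw [coeff_sub, hcoeff_cf2, X_eq_monomial, coeff_monomial, if_neg]
        · norm_num
        · intro hc
          have := congrArg (fun s : Fin 3 →₀ ℕ => s 2) hc
          simp [Finsupp.single_apply] at this
      have hmem : (Finsupp.single 1 1 + Finsupp.single 2 1 : Fin 3 →₀ ℕ) ∈
          (X 1 - cf2).support := by
        rw [mem_support_iff, hco]
        norm_num
      have := degreeOf_le_iff.mp (le_refl (degreeOf 2 (X 1 - cf2))) _ hmem
      rw [hs1_apply2] at this
      exact this
  refine ⟨cf1, ⟨-X 1, ?_, ?_⟩, 0, ⟨initialWrt 1 cf1, ?_, ?_⟩, rfl⟩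
  · have he : degreeOf 2 (X 1 - cf2) + 1 - degreeOf 2 cf2 = 1 := by
      rw [hd2Q, hd2cf2]
    rw [he, pow_one, hinit2, cf2, cf1]
    ring
  · rw [hd2cf1, hd2cf2]
    omega
  · have he : degreeOf 1 cf1 + 1 - degreeOf 1 cf1 = 1 := by omega
    rw [he, pow_one, hinit1, one_mul, add_zero]
  · rw [degreeOf_zero, hd1cf1]
    omega

theorem Tex_premPQ : ¬ IterPrem (cf2 + (X 1 - cf2)) Tex.elems.reverse 0 := by
  have hPQ : cf2 + (X 1 - cf2) = X 1 := by ring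
  rw [hPQ, Tex_rev]
  rintro ⟨S, hS, S', hS', h0⟩
  have hd2X1 : degreeOf 2 (X 1 : MvPolynomial (Fin 3) ℚ) = 0 := by
    classical
    rw [degreeOf_X]; simp
  have hd1X1 : degreeOf 1 (X 1 : MvPolynomial (Fin 3) ℚ) = 1 := by
    classical
    rw [degreeOf_X]; simp
  have hself1 : IsPrem 2 cf2 (X 1) (X 1) := isPrem_self (by rw [hd2X1, hd2cf2]; omega)
  have hSX : S = X 1 := isPrem_unique hcf2_ne hS hself1
  subst hSX
  have hself2 : IsPrem 1 cf1 (X 1) (X 1) := isPrem_self (by rw [hd1X1, hd1cf1]; omega)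
  have hSX' : S' = X 1 := isPrem_unique hcf1_ne hS' hself2
  rw [hSX'] at h0
  exact X_ne_zero 1 h0.symm

theorem counterexample_exists :
    ∃ (T : TriSet ℚ (Fin 3)) (P Q : MvPolynomial (Fin 3) ℚ),
      ¬ T.Regular ∧
      IterPrem P T.elems.reverse 0 ∧ IterPrem Q T.elems.reverse 0 ∧
      ¬ IterPrem (P + Q) T.elems.reverse 0 :=
  ⟨Tex, cf2, X 1 - cf2, Tex_not_regular, Tex_premP, Tex_premQ, Tex_premPQ⟩

end Counterexample

end CharDec

open CharDec MvPolynomial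

/-- A triangular set `T` is regular if and only if
`{F : prem(F, T) = 0} = sat(T)`; and additivity of the set
`{F : prem(F, T) = 0}` fails in general for irregular triangular sets:
there are an irregular triangular set `T` and polynomials `P, Q` with
`prem(P, T) = 0` and `prem(Q, T) = 0` but `prem(P + Q, T) ≠ 0`. -/
theorem stmt_15 {K : Type*} [Field K] {n : ℕ} :
    (∀ T : TriSet K (Fin n),
      (T.Regular ↔
        {F : MvPolynomial (Fin n) K | IterPrem F T.elems.reverse 0} = ↑T.sat)) ∧
    ∃ (T : TriSet ℚ (Fin 3)) (P Q : MvPolynomial (Fin 3) ℚ),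
      ¬ T.Regular ∧
      IterPrem P T.elems.reverse 0 ∧ IterPrem Q T.elems.reverse 0 ∧
      ¬ IterPrem (P + Q) T.elems.reverse 0 := by
  constructor
  · intro T
    exact T.regular_iff_premZero_eq_sat
  · exact CharDec.counterexample_exists
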